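/- Let G be a finite simple undirected graph with eigenvalues λ_1 ≥ λ_2 ≥ ⋯ ≥ λ_n and spectral radius ρ = λ_1, and let m_k = Σ_{l=1}^n α_l λ_l^k be a spectral moment sequence of G with nonnegative weights α_l, where α_1 is the weight attached to λ_1. Assume α_1 > 0 and m_0 > 0. Then for every k ≥ 1, m_0 · ρ^k ≤ m_k + sqrt((m_0/α_1 − 1)·(m_0·m_{2k} − m_k^2)), where sqrt denotes the real square root. -/

import Mathlib

open Matrix Finset

/-- Corollary 4.3 of the paper: upper bound on `ρ^k` from a 2×2 minor of the Hankel
matrix of a spectral moment sequence with weight `α₁ > 0` at `λ₁ = ρ`. -/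
theorem stmt_10 (n : ℕ) (hn : 1 ≤ n) (G : SimpleGraph (Fin n)) [DecidableRel G.Adj]
    (lam : Fin n → ℝ) (hlam : Antitone lam)
    (U : Matrix (Fin n) (Fin n) ℝ)
    (hU : Uᵀ * U = 1)
    (hAU : G.adjMatrix ℝ * U = U * Matrix.diagonal lam)
    (rho : ℝ) (hrho : IsGreatest (Set.range fun l => |lam l|) rho)
    (α : Fin n → ℝ) (hα : ∀ l, 0 ≤ α l)
    (m : ℕ → ℝ) (hm : ∀ k, m k = ∑ l, α l * lam l ^ k)
    (hα0 : 0 < α ⟨0, hn⟩) (hm0 : 0 < m 0) :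
    ∀ k : ℕ, 1 ≤ k →
      m 0 * rho ^ k ≤ m k +
        Real.sqrt ((m 0 / α ⟨0, hn⟩ - 1) * (m 0 * m (2 * k) - m k ^ 2)) := by
  set i0 : Fin n := ⟨0, hn⟩ with hi0
  have hUU : U * Uᵀ = 1 := mul_eq_one_comm.mp hU
  have hAeq : G.adjMatrix ℝ = U * Matrix.diagonal lam * Uᵀ := by
    calc G.adjMatrix ℝ = G.adjMatrix ℝ * (U * Uᵀ) := by rw [hUU, Matrix.mul_one]
      _ = (G.adjMatrix ℝ * U) * Uᵀ := by rw [Matrix.mul_assoc]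
      _ = U * Matrix.diagonal lam * Uᵀ := by rw [hAU]
  -- Rayleigh quotient bound
  have rayleigh : ∀ w : Fin n → ℝ,
      w ⬝ᵥ (G.adjMatrix ℝ *ᵥ w) ≤ lam i0 * (w ⬝ᵥ w) := by
    intro w
    have hw : w ᵥ* U = Uᵀ *ᵥ w := (Matrix.mulVec_transpose U w).symm
    have h1 : w ⬝ᵥ (G.adjMatrix ℝ *ᵥ w) = ∑ l, lam l * (Uᵀ *ᵥ w) l ^ 2 := by
      rw [hAeq, Matrix.mul_assoc, ← Matrix.mulVec_mulVec,
        Matrix.dotProduct_mulVec, hw, ← Matrix.mulVec_mulVec]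
      simp only [dotProduct, Matrix.mulVec_diagonal]
      exact Finset.sum_congr rfl fun l _ => by ring
    have h2 : w ⬝ᵥ w = ∑ l, (Uᵀ *ᵥ w) l ^ 2 := by
      have h3 : (Uᵀ *ᵥ w) ⬝ᵥ (Uᵀ *ᵥ w) = w ⬝ᵥ w := by
        rw [Matrix.dotProduct_mulVec, Matrix.mulVec_transpose,
          Matrix.vecMul_vecMul, hUU, Matrix.vecMul_one]
      rw [← h3]
      simp only [dotProduct]
      exact Finset.sum_congr rfl fun l _ => by ring
    rw [h1, h2, Finset.mul_sum]
    refine Finset.sum_le_sum fun l _ => ?_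
    exact mul_le_mul_of_nonneg_right
      (hlam (show i0 ≤ l by simp [hi0, Fin.le_def])) (sq_nonneg _)
  -- every |lam l| is at most lam i0
  have habs : ∀ l, |lam l| ≤ lam i0 := by
    intro l
    set v : Fin n → ℝ := fun i => U i l with hv
    have hv1 : v ⬝ᵥ v = 1 := by
      have := congrFun (congrFun hU l) l
      simpa [Matrix.mul_apply, Matrix.one_apply, dotProduct,
        mul_comm] using this
    have hAv : ∀ i, (G.adjMatrix ℝ *ᵥ v) i = lam l * v i := by
      intro i
      have h := congrFun (congrFun hAU i) l
      rw [Matrix.mul_diagonal] at h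
      simp only [Matrix.mul_apply] at h
      simpa [hv, Matrix.mulVec, dotProduct, mul_comm] using h
    have heig : v ⬝ᵥ (G.adjMatrix ℝ *ᵥ v) = lam l := by
      have : v ⬝ᵥ (G.adjMatrix ℝ *ᵥ v) = lam l * (v ⬝ᵥ v) := by
        simp only [dotProduct, hAv, Finset.mul_sum]
        exact Finset.sum_congr rfl fun i _ => by ring
      rw [this, hv1, mul_one]
    set w : Fin n → ℝ := fun i => |v i| with hww
    have hww2 : w ⬝ᵥ w = 1 := by
      simpa [hww, dotProduct, abs_mul_abs_self] using hv1
    have hle : |v ⬝ᵥ (G.adjMatrix ℝ *ᵥ v)| ≤ w ⬝ᵥ (G.adjMatrix ℝ *ᵥ w) := by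
      simp only [dotProduct, Matrix.mulVec]
      refine (Finset.abs_sum_le_sum_abs _ _).trans ?_
      refine Finset.sum_le_sum fun i _ => ?_
      rw [abs_mul]
      refine mul_le_mul_of_nonneg_left ?_ (abs_nonneg _)
      refine (Finset.abs_sum_le_sum_abs _ _).trans ?_
      refine Finset.sum_le_sum fun j _ => ?_
      rw [abs_mul]
      refine mul_le_mul_of_nonneg_right (le_of_eq ?_) (abs_nonneg _)
      simp [SimpleGraph.adjMatrix_apply]
      split <;> simp
    calc |lam l| = |v ⬝ᵥ (G.adjMatrix ℝ *ᵥ v)| := by rw [heig]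
      _ ≤ w ⬝ᵥ (G.adjMatrix ℝ *ᵥ w) := hle
      _ ≤ lam i0 * (w ⬝ᵥ w) := rayleigh w
      _ = lam i0 := by rw [hww2, mul_one]
  -- hence rho = lam i0
  have hrho_eq : rho = lam i0 := by
    obtain ⟨⟨l0, hl0⟩, hub⟩ := hrho
    have h1 : rho ≤ lam i0 := hl0 ▸ habs l0
    have h2 : lam i0 ≤ rho := (le_abs_self _).trans (hub ⟨i0, rfl⟩)
    linarith
  -- main inequality
  intro k hk
  set x := lam i0 ^ k with hx
  have hxrho : rho ^ k = x := by rw [hrho_eq]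
  have hxl : ∀ l, lam l ^ k ≤ x := by
    intro l
    calc lam l ^ k ≤ |lam l ^ k| := le_abs_self _
      _ = |lam l| ^ k := by rw [abs_pow]
      _ ≤ lam i0 ^ k := pow_le_pow_left₀ (abs_nonneg _) (habs l) k
  set s := Finset.univ.erase i0 with hs
  set P := ∑ l ∈ s, α l with hP
  set S := ∑ l ∈ s, α l * lam l ^ k with hS
  set T := ∑ l ∈ s, α l * (lam l ^ k) ^ 2 with hT
  have hpow2 : ∀ y : ℝ, y ^ (2 * k) = (y ^ k) ^ 2 := fun y => by
    rw [two_mul, pow_add, sq]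
  have hsplit : ∀ j, m j = α i0 * lam i0 ^ j + ∑ l ∈ s, α l * lam l ^ j := by
    intro j
    rw [hm j, ← Finset.add_sum_erase _ _ (Finset.mem_univ i0)]
  have ha : m 0 = α i0 + P := by
    rw [hsplit 0]; simp [hP]
  have hb : m k = α i0 * x + S := hsplit k
  have hc : m (2 * k) = α i0 * x ^ 2 + T := by
    rw [hsplit (2 * k), hpow2]
    congr 1
    exact Finset.sum_congr rfl fun l _ => by rw [hpow2]
  have CS : ∀ f : Fin n → ℝ,
      (∑ l ∈ s, α l * f l) ^ 2 ≤ P * ∑ l ∈ s, α l * f l ^ 2 := by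
    intro f
    have h := Finset.sum_mul_sq_le_sq_mul_sq s (fun l => Real.sqrt (α l))
      (fun l => Real.sqrt (α l) * f l)
    have e1 : ∀ l ∈ s, Real.sqrt (α l) * (Real.sqrt (α l) * f l) = α l * f l := by
      intro l _; rw [← mul_assoc, Real.mul_self_sqrt (hα l)]
    have e2 : ∀ l ∈ s, Real.sqrt (α l) ^ 2 = α l := fun l _ => Real.sq_sqrt (hα l)
    have e3 : ∀ l ∈ s, (Real.sqrt (α l) * f l) ^ 2 = α l * f l ^ 2 := by
      intro l _; rw [mul_pow, Real.sq_sqrt (hα l)]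
    rwa [Finset.sum_congr rfl e1, Finset.sum_congr rfl e2,
      Finset.sum_congr rfl e3] at h
  have hS2 : S ^ 2 ≤ P * T := CS fun l => lam l ^ k
  set Q := ∑ l ∈ s, α l * (x - lam l ^ k) ^ 2 with hQdef
  have hQ : (∑ l ∈ s, α l * (x - lam l ^ k)) ^ 2 ≤ P * Q := CS fun l => x - lam l ^ k
  have id1 : ∑ l ∈ s, α l * (x - lam l ^ k) = P * x - S := by
    rw [hP, hS, Finset.sum_mul, ← Finset.sum_sub_distrib]
    exact Finset.sum_congr rfl fun l _ => by ring
  have id2 : Q = P * x ^ 2 - 2 * x * S + T := by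
    rw [hQdef, hP, hS, hT, Finset.sum_mul, Finset.mul_sum, ← Finset.sum_sub_distrib,
      ← Finset.sum_add_distrib]
    exact Finset.sum_congr rfl fun l _ => by ring
  have hQnn : 0 ≤ Q :=
    Finset.sum_nonneg fun l _ => mul_nonneg (hα l) (sq_nonneg _)
  have hPnn : 0 ≤ P := Finset.sum_nonneg fun l _ => hα l
  have key : α i0 * Q ≤ m 0 * m (2 * k) - m k ^ 2 := by
    have hident : m 0 * m (2 * k) - m k ^ 2 - α i0 * Q = P * T - S ^ 2 := by
      rw [ha, hb, hc, id2]; ring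
    linarith
  have hfrac : m 0 / α i0 - 1 = P / α i0 := by
    rw [ha]; field_simp; ring
  set D := (m 0 / α i0 - 1) * (m 0 * m (2 * k) - m k ^ 2) with hD
  have hDeq : D = P / α i0 * (m 0 * m (2 * k) - m k ^ 2) := by rw [hD, hfrac]
  have hacb : 0 ≤ m 0 * m (2 * k) - m k ^ 2 :=
    le_trans (mul_nonneg hα0.le hQnn) key
  have hDnn : 0 ≤ D := by
    rw [hDeq]; exact mul_nonneg (div_nonneg hPnn hα0.le) hacb
  have main : (m 0 * x - m k) ^ 2 ≤ D := by
    have h1 : m 0 * x - m k = P * x - S := by rw [ha, hb]; ring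
    have h2 : P * Q ≤ D := by
      rw [hDeq]
      calc P * Q = P / α i0 * (α i0 * Q) := by field_simp
        _ ≤ P / α i0 * (m 0 * m (2 * k) - m k ^ 2) :=
          mul_le_mul_of_nonneg_left key (div_nonneg hPnn hα0.le)
    calc (m 0 * x - m k) ^ 2 = (∑ l ∈ s, α l * (x - lam l ^ k)) ^ 2 := by
          rw [id1, h1]
      _ ≤ P * Q := hQ
      _ ≤ D := h2
  rw [hxrho]
  rcases le_or_gt (m 0 * x) (m k) with h | h
  · have := Real.sqrt_nonneg D
    linarith
  · have hpos : 0 ≤ m 0 * x - m k := by linarith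
    have := (Real.le_sqrt hpos hDnn).mpr main
    linarith
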